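/- Let n ≥ 1, let N = {(t,x) ∈ ℝ × ℝⁿ : t = |x|} be the future null cone and C = {(t,x) : t > |x|} the open future time-like cone. If F : N ∪ C → ℂ is continuous and satisfies F(U)·F(V) = F(U+V) for all U, V ∈ N, then F satisfies F(X)·F(Y) = F(X+Y) for all X, Y ∈ C. -/
import Mathlib

open RealInnerProductSpace

set_option maxHeartbeats 1000000 in
theorem null_cone_cauchy_extension (n : ℕ) (hn : 1 ≤ n)
    (F : ℝ × EuclideanSpace ℝ (Fin n) → ℂ)
    (hF : ContinuousOn F {p : ℝ × EuclideanSpace ℝ (Fin n) | ‖p.2‖ ≤ p.1})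
    (heq : ∀ U V : ℝ × EuclideanSpace ℝ (Fin n),
      U.1 = ‖U.2‖ → V.1 = ‖V.2‖ → F U * F V = F (U + V)) :
    ∀ X Y : ℝ × EuclideanSpace ℝ (Fin n),
      ‖X.2‖ < X.1 → ‖Y.2‖ < Y.1 → F X * F Y = F (X + Y) := by
  rintro ⟨s, x⟩ ⟨t, y⟩ hX hY
  dsimp only at hX hY
  have hs : 0 < s := (norm_nonneg x).trans_lt hX
  have ht : 0 < t := (norm_nonneg y).trans_lt hY
  obtain ⟨u, hsu⟩ : ∃ u : EuclideanSpace ℝ (Fin n), s • u = x :=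
    ⟨s⁻¹ • x, smul_inv_smul₀ hs.ne' x⟩
  obtain ⟨v, htv⟩ : ∃ v : EuclideanSpace ℝ (Fin n), t • v = y :=
    ⟨t⁻¹ • y, smul_inv_smul₀ ht.ne' y⟩
  have hnu : s * ‖u‖ = ‖x‖ := by
    rw [← hsu, norm_smul, Real.norm_eq_abs, abs_of_pos hs]
  have hnv : t * ‖v‖ = ‖y‖ := by
    rw [← htv, norm_smul, Real.norm_eq_abs, abs_of_pos ht]
  have hu1 : ‖u‖ < 1 := by nlinarith [norm_nonneg u]
  have hv1 : ‖v‖ < 1 := by nlinarith [norm_nonneg v]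
  obtain ⟨d, hd, m, hm0, hvum⟩ :
      ∃ d : EuclideanSpace ℝ (Fin n), ‖d‖ = 1 ∧ ∃ m : ℝ, 0 ≤ m ∧ v = u + m • d := by
    by_cases h : v = u
    · exact ⟨EuclideanSpace.single ⟨0, hn⟩ 1, by simp [EuclideanSpace.norm_single], 0,
        le_refl 0, by simp [h]⟩
    · refine ⟨‖v - u‖⁻¹ • (v - u), ?_, ‖v - u‖, norm_nonneg _, ?_⟩
      · rw [norm_smul, Real.norm_eq_abs, abs_inv, abs_norm,
          inv_mul_cancel₀ (norm_ne_zero_iff.2 (sub_ne_zero.2 h))]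
      · rw [smul_smul, mul_inv_cancel₀ (norm_ne_zero_iff.2 (sub_ne_zero.2 h)), one_smul]
        abel
  obtain ⟨c, hc_def⟩ : ∃ c : ℝ, c = ⟪u, d⟫ := ⟨_, rfl⟩
  obtain ⟨D, hD0, hD2⟩ : ∃ D : ℝ, 0 < D ∧ D ^ 2 = c ^ 2 + 1 - ‖u‖ ^ 2 := by
    refine ⟨Real.sqrt (c ^ 2 + 1 - ‖u‖ ^ 2), ?_, ?_⟩
    · apply Real.sqrt_pos.2
      nlinarith [sq_nonneg c, norm_nonneg u]
    · exact Real.sq_sqrt (by nlinarith [sq_nonneg c, norm_nonneg u])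
  have hcD1 : -D < c := by nlinarith [norm_nonneg u, sq_nonneg (c + D)]
  have hcD2 : c < D := by nlinarith [norm_nonneg u, sq_nonneg (c - D)]
  have hnormr : ∀ r : ℝ, ‖u + r • d‖ ^ 2 = ‖u‖ ^ 2 + 2 * r * c + r ^ 2 := by
    intro r
    rw [norm_add_sq_real, real_inner_smul_right, norm_smul, Real.norm_eq_abs, mul_pow,
      sq_abs, hd, ← hc_def]
    ring
  obtain ⟨p, hp_def⟩ : ∃ p : EuclideanSpace ℝ (Fin n), p = u + (D - c) • d := ⟨_, rfl⟩
  obtain ⟨q, hq_def⟩ : ∃ q : EuclideanSpace ℝ (Fin n), q = u + (-D - c) • d := ⟨_, rfl⟩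
  have hp1 : ‖p‖ = 1 := by
    have h2 : ‖p‖ ^ 2 = 1 := by rw [hp_def, hnormr]; nlinarith
    rw [← Real.sqrt_sq (norm_nonneg p), h2, Real.sqrt_one]
  have hq1 : ‖q‖ = 1 := by
    have h2 : ‖q‖ ^ 2 = 1 := by rw [hq_def, hnormr]; nlinarith
    rw [← Real.sqrt_sq (norm_nonneg q), h2, Real.sqrt_one]
  have hm_rp : m < D - c := by
    have hvm : ‖v‖ ^ 2 = ‖u‖ ^ 2 + 2 * m * c + m ^ 2 := by rw [hvum, hnormr]
    nlinarith [norm_nonneg v]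
  obtain ⟨a, ha_def⟩ : ∃ a : ℝ, a = s * ((D + c) / (2 * D)) := ⟨_, rfl⟩
  obtain ⟨b, hb_def⟩ : ∃ b : ℝ, b = s * ((D - c) / (2 * D)) := ⟨_, rfl⟩
  obtain ⟨a', ha'_def⟩ : ∃ a' : ℝ, a' = t * ((m + D + c) / (2 * D)) := ⟨_, rfl⟩
  obtain ⟨b', hb'_def⟩ : ∃ b' : ℝ, b' = t * ((D - c - m) / (2 * D)) := ⟨_, rfl⟩
  have ha0 : 0 ≤ a := by
    rw [ha_def]
    exact mul_nonneg hs.le (div_nonneg (by linarith) (by linarith))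
  have hb0 : 0 ≤ b := by
    rw [hb_def]
    exact mul_nonneg hs.le (div_nonneg (by linarith) (by linarith))
  have ha'0 : 0 ≤ a' := by
    rw [ha'_def]
    exact mul_nonneg ht.le (div_nonneg (by linarith) (by linarith))
  have hb'0 : 0 ≤ b' := by
    rw [hb'_def]
    exact mul_nonneg ht.le (div_nonneg (by linarith) (by linarith))
  have hab : a + b = s := by
    rw [ha_def, hb_def]; field_simp; ring
  have ha'b' : a' + b' = t := by
    rw [ha'_def, hb'_def]; field_simp; ring
  have habd : a * (D - c) + b * (-D - c) = 0 := by
    rw [ha_def, hb_def]; field_simp; ring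
  have ha'b'd : a' * (D - c) + b' * (-D - c) = t * m := by
    rw [ha'_def, hb'_def]; field_simp; ring
  have hx2 : a • p + b • q = x := by
    rw [← hsu, hp_def, hq_def]
    match_scalars
    · linarith
    · linarith [habd]
  have hy2 : a' • p + b' • q = y := by
    rw [← htv, hvum, hp_def, hq_def]
    match_scalars
    · linarith
    · linarith [ha'b'd]
  have hnull : ∀ (α : ℝ) (w : EuclideanSpace ℝ (Fin n)), 0 ≤ α → ‖w‖ = 1 →
      ((α, α • w) : ℝ × EuclideanSpace ℝ (Fin n)).1 = ‖((α, α • w) :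
        ℝ × EuclideanSpace ℝ (Fin n)).2‖ := by
    intro α w hα hw
    dsimp only
    rw [norm_smul, hw, mul_one, Real.norm_eq_abs, abs_of_nonneg hα]
  have e1 : F (a, a • p) * F (b, b • q) = F (s, x) := by
    rw [heq _ _ (hnull a p ha0 hp1) (hnull b q hb0 hq1)]
    congr 1
    show ((a + b, a • p + b • q) : ℝ × EuclideanSpace ℝ (Fin n)) = (s, x)
    rw [hab, hx2]
  have e2 : F (a', a' • p) * F (b', b' • q) = F (t, y) := by
    rw [heq _ _ (hnull a' p ha'0 hp1) (hnull b' q hb'0 hq1)]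
    congr 1
    show ((a' + b', a' • p + b' • q) : ℝ × EuclideanSpace ℝ (Fin n)) = (t, y)
    rw [ha'b', hy2]
  have e4 : F (a, a • p) * F (a', a' • p) = F (a + a', (a + a') • p) := by
    rw [heq _ _ (hnull a p ha0 hp1) (hnull a' p ha'0 hp1)]
    congr 1
    show ((a + a', a • p + a' • p) : ℝ × EuclideanSpace ℝ (Fin n)) = _
    rw [← add_smul]
  have e5 : F (b, b • q) * F (b', b' • q) = F (b + b', (b + b') • q) := by
    rw [heq _ _ (hnull b q hb0 hq1) (hnull b' q hb'0 hq1)]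
    congr 1
    show ((b + b', b • q + b' • q) : ℝ × EuclideanSpace ℝ (Fin n)) = _
    rw [← add_smul]
  have e3 : F (a + a', (a + a') • p) * F (b + b', (b + b') • q) =
      F ((s, x) + (t, y)) := by
    rw [heq _ _ (hnull (a + a') p (by linarith) hp1) (hnull (b + b') q (by linarith) hq1)]
    congr 1
    show ((a + a' + (b + b'), (a + a') • p + (b + b') • q) :
      ℝ × EuclideanSpace ℝ (Fin n)) = (s + t, x + y)
    have h1 : a + a' + (b + b') = s + t := by linarith
    have h2 : (a + a') • p + (b + b') • q = x + y := by
      rw [add_smul, add_smul, ← hx2, ← hy2]; abel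
    rw [h1, h2]
  rw [← e1, ← e2, ← e3, ← e4, ← e5]
  ring
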